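/- Let Γ be a compact group, A and B unital C*-algebras, and κ : A → B a unital *-homomorphism. Suppose 0 ≤ r < 1/17 and ρ₀ : Γ → U(A) is a continuous map such that for all g, h ∈ Γ, ‖ρ₀(gh) - ρ₀(g)ρ₀(h)‖ ≤ r and κ∘ρ₀ is a group homomorphism. Then there exists a continuous group homomorphism ρ : Γ → U(A) with sup_{g∈Γ} ‖ρ(g) - ρ₀(g)‖ ≤ 2r/(1 - 17r) and κ∘ρ = κ∘ρ₀. -/

import Mathlib

set_option linter.unusedSectionVars false
set_option maxHeartbeats 2000000
open MeasureTheory Topology Filter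

section Aux
variable {Γ : Type*} [Group Γ] [TopologicalSpace Γ] [IsTopologicalGroup Γ] [CompactSpace Γ]
    [MeasurableSpace Γ] [BorelSpace Γ]
    {A : Type*} [NormedRing A] [StarRing A] [CStarRing A] [CompleteSpace A]
    [NormedAlgebra ℂ A] [StarModule ℂ A]
    {B : Type*} [NormedRing B] [StarRing B] [CStarRing B] [CompleteSpace B]
    [NormedAlgebra ℂ B] [StarModule ℂ B]

noncomputable def st4μ (Γ : Type*) [Group Γ] [TopologicalSpace Γ] [IsTopologicalGroup Γ]
    [CompactSpace Γ] [MeasurableSpace Γ] [BorelSpace Γ] : Measure Γ :=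
  Measure.haarMeasure ⊤

theorem st4μ_prob : IsProbabilityMeasure (st4μ Γ) :=
  ⟨by simpa [st4μ] using Measure.haarMeasure_self (G := Γ) (K₀ := ⊤)⟩

theorem st4_integrable {φ : Γ → A} (h : Continuous φ) : Integrable φ (st4μ Γ) := by
  haveI := st4μ_prob (Γ := Γ)
  exact h.integrable_of_hasCompactSupport (HasCompactSupport.of_compactSpace _)

noncomputable def st4avg (ρ : Γ → A) : Γ → A :=
  fun g => ∫ h, ρ (g*h) * star (ρ h) ∂(st4μ Γ)

theorem st4μ_inv : (st4μ Γ).IsMulLeftInvariant := by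
  unfold st4μ; infer_instance

theorem st4_integral_const (a : A) : ∫ _ : Γ, a ∂(st4μ Γ) = a := by
  haveI := st4μ_prob (Γ := Γ)
  simp

theorem st4_integral_mul_left {φ : Γ → A} (h : Integrable φ (st4μ Γ)) (a : A) :
    ∫ x, a * φ x ∂(st4μ Γ) = a * ∫ x, φ x ∂(st4μ Γ) :=
  (ContinuousLinearMap.mul ℂ A a).integral_comp_comm h

theorem st4_integral_mul_right {φ : Γ → A} (h : Integrable φ (st4μ Γ)) (a : A) :
    ∫ x, φ x * a ∂(st4μ Γ) = (∫ x, φ x ∂(st4μ Γ)) * a :=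
  ((ContinuousLinearMap.mul ℂ A).flip a).integral_comp_comm h

theorem st4_integral_star (φ : Γ → A) :
    ∫ x, star (φ x) ∂(st4μ Γ) = star (∫ x, φ x ∂(st4μ Γ)) := by
  simpa using ((starL' ℝ : A ≃L[ℝ] A).integral_comp_comm (μ := st4μ Γ) φ)

theorem st4_integral_shift (φ : Γ → A) (g : Γ) :
    ∫ x, φ (g * x) ∂(st4μ Γ) = ∫ x, φ x ∂(st4μ Γ) := by
  haveI := st4μ_inv (Γ := Γ)
  exact integral_mul_left_eq_self φ g

theorem st4_norm_integral_le {φ : Γ → A} {C : ℝ} (h : ∀ x, ‖φ x‖ ≤ C) :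
    ‖∫ x, φ x ∂(st4μ Γ)‖ ≤ C := by
  haveI := st4μ_prob (Γ := Γ)
  have := norm_integral_le_of_norm_le_const (μ := st4μ Γ) (f := φ) (C := C)
    (Filter.Eventually.of_forall h)
  simpa using this

theorem st4_integral_sub {φ ψ : Γ → A} (hφ : Integrable φ (st4μ Γ)) (hψ : Integrable ψ (st4μ Γ)) :
    ∫ x, (φ x - ψ x) ∂(st4μ Γ) = (∫ x, φ x ∂(st4μ Γ)) - ∫ x, ψ x ∂(st4μ Γ) :=
  integral_sub hφ hψ

theorem st4avg_cont (ρ : Γ → A) (hcont : Continuous ρ) {C : ℝ} (hC : ∀ g, ‖ρ g‖ ≤ C) :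
    Continuous (st4avg ρ) := by
  haveI := st4μ_prob (Γ := Γ)
  have hC0 : 0 ≤ C := le_trans (norm_nonneg _) (hC 1)
  rw [continuous_iff_continuousAt]
  intro g₀
  apply Metric.tendsto_nhds.2
  intro ε hε
  set ε' : ℝ := ε / (2 * (C + 1)) with hε'def
  have hε'pos : 0 < ε' := by positivity
  have key : ∀ᶠ g in 𝓝 g₀, ∀ h, h ∈ (Set.univ : Set Γ) → ‖ρ (g*h) - ρ (g₀*h)‖ < ε' := by
    apply isCompact_univ.eventually_forall_of_forall_eventually
    intro y _
    have hcψ : Continuous fun z : Γ×Γ => ‖ρ (z.1*z.2) - ρ (g₀*z.2)‖ := by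
      apply Continuous.norm
      exact (hcont.comp (continuous_fst.mul continuous_snd)).sub
        (hcont.comp (continuous_const.mul continuous_snd))
    have h0 : ‖ρ ((g₀,y).1*(g₀,y).2) - ρ (g₀*(g₀,y).2)‖ = 0 := by simp
    have := hcψ.continuousAt (x := (g₀, y))
    rw [ContinuousAt, h0] at this
    exact this.eventually_lt_const hε'pos
  filter_upwards [key] with g hg
  rw [dist_eq_norm]
  have i1 : Integrable (fun h => ρ (g*h) * star (ρ h)) (st4μ Γ) :=
    st4_integrable ((hcont.comp (continuous_mul_left g)).mul hcont.star)
  have i2 : Integrable (fun h => ρ (g₀*h) * star (ρ h)) (st4μ Γ) :=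
    st4_integrable ((hcont.comp (continuous_mul_left g₀)).mul hcont.star)
  have hsub : st4avg ρ g - st4avg ρ g₀ = ∫ h, (ρ (g*h) - ρ (g₀*h)) * star (ρ h) ∂(st4μ Γ) := by
    unfold st4avg
    rw [← st4_integral_sub i1 i2]
    congr 1
    funext h
    rw [sub_mul]
  rw [hsub]
  have hb : ‖∫ h, (ρ (g*h) - ρ (g₀*h)) * star (ρ h) ∂(st4μ Γ)‖ ≤ ε' * C := by
    apply st4_norm_integral_le
    intro h
    calc ‖(ρ (g*h) - ρ (g₀*h)) * star (ρ h)‖ ≤ ‖ρ (g*h) - ρ (g₀*h)‖ * ‖star (ρ h)‖ :=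
          norm_mul_le _ _
      _ ≤ ε' * C := by
          rw [norm_star]
          exact mul_le_mul (le_of_lt (hg h (Set.mem_univ h))) (hC _) (norm_nonneg _) (le_of_lt hε'pos)
  have : ε' * C < ε := by
    rw [hε'def]
    rw [div_mul_eq_mul_div, div_lt_iff₀ (by positivity)]
    nlinarith
  linarith


noncomputable def st4q (c : A) : A := (8 : ℂ)⁻¹ • (15 - 10 * c + 3 * (c * c))

theorem st4q_star {c : A} (hc : star c = c) : star (st4q c) = st4q c := by
  unfold st4q
  rw [star_smul, star_add, star_sub, star_mul, star_mul, star_mul, hc]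
  have h10 : star (10 : A) = 10 := by simp
  have h15 : star (15 : A) = 15 := by simp
  have h3 : star (3 : A) = 3 := by simp
  rw [h10, h15, h3]
  have c10 : c * 10 = 10 * c := (Nat.cast_commute 10 c).symm.eq
  have c3 : (c * c) * 3 = 3 * (c * c) := (Nat.cast_commute 3 (c*c)).symm.eq
  have : star (8 : ℂ)⁻¹ = (8 : ℂ)⁻¹ := by
    rw [star_inv₀]; norm_num
  rw [this, c10, ← mul_assoc, c3, mul_assoc (3:A) c c]

theorem st4q_poly (c : A) :
    (15 - 10 * c + 3 * (c * c)) * c * (15 - 10 * c + 3 * (c * c)) - 64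
      = (40:ℂ) • ((c-1)*(c-1)*(c-1)) - (15:ℂ) • ((c-1)*(c-1)*(c-1)*(c-1))
        + (9:ℂ) • ((c-1)*(c-1)*(c-1)*(c-1)*(c-1)) := by
  have h40 : (40:ℂ) • ((c-1)*(c-1)*(c-1)) = (40:A) * ((c-1)*(c-1)*(c-1)) := by
    rw [Algebra.smul_def, map_ofNat]
  have h15 : (15:ℂ) • ((c-1)*(c-1)*(c-1)*(c-1)) = (15:A) * ((c-1)*(c-1)*(c-1)*(c-1)) := by
    rw [Algebra.smul_def, map_ofNat]
  have h9 : (9:ℂ) • ((c-1)*(c-1)*(c-1)*(c-1)*(c-1)) = (9:A) * ((c-1)*(c-1)*(c-1)*(c-1)*(c-1)) := by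
    rw [Algebra.smul_def, map_ofNat]
  rw [h40, h15, h9]
  noncomm_ring
  simp [zsmul_eq_mul]

theorem st4q_comm (a : A) : a * st4q (star a * a) = st4q (a * star a) * a := by
  unfold st4q
  rw [mul_smul_comm, smul_mul_assoc]
  congr 1
  noncomm_ring

theorem st4q_mulc (c : A) : st4q c * c = c * st4q c := by
  unfold st4q
  rw [smul_mul_assoc, mul_smul_comm]
  congr 1
  noncomm_ring

theorem st4_qcq_norm (c : A) :
    ‖st4q c * c * st4q c - 1‖ ≤ (40*‖c-1‖^3 + 15*‖c-1‖^4 + 9*‖c-1‖^5)/64 := by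
  have hYY : st4q c * c * st4q c
      = (64:ℂ)⁻¹ • ((15 - 10*c+3*(c*c)) * c * (15-10*c+3*(c*c))) := by
    unfold st4q
    rw [smul_mul_assoc, smul_mul_assoc, mul_smul_comm, smul_smul]
    norm_num
  have h64 : ((64:ℂ)) • (1:A) = (64:A) := by rw [Algebra.smul_def, map_ofNat, mul_one]
  have step1 : st4q c * c * st4q c - 1
      = (64:ℂ)⁻¹ • ((15 - 10*c+3*(c*c)) * c * (15-10*c+3*(c*c)) - 64) := by
    rw [hYY, ← h64, smul_sub, smul_smul]
    norm_num
  rw [step1, st4q_poly, norm_smul]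
  set w := c - 1 with hw
  have k3 : ‖w*w*w‖ ≤ ‖w‖^3 := by
    calc ‖w*w*w‖ ≤ ‖w*w‖*‖w‖ := norm_mul_le _ _
    _ ≤ (‖w‖*‖w‖)*‖w‖ := by nlinarith [norm_mul_le w w, norm_nonneg w, norm_nonneg (w*w)]
    _ = ‖w‖^3 := by ring
  have k4 : ‖w*w*w*w‖ ≤ ‖w‖^4 := by
    calc ‖w*w*w*w‖ ≤ ‖w*w*w‖*‖w‖ := norm_mul_le _ _
    _ ≤ ‖w‖^3*‖w‖ := by nlinarith [norm_nonneg w, norm_nonneg (w*w*w)]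
    _ = ‖w‖^4 := by ring
  have k5 : ‖w*w*w*w*w‖ ≤ ‖w‖^5 := by
    calc ‖w*w*w*w*w‖ ≤ ‖w*w*w*w‖*‖w‖ := norm_mul_le _ _
    _ ≤ ‖w‖^4*‖w‖ := by nlinarith [norm_nonneg w, norm_nonneg (w*w*w*w)]
    _ = ‖w‖^5 := by ring
  have hnum : ‖((64:ℂ))⁻¹‖ = 64⁻¹ := by norm_num
  rw [hnum]
  have hb : ‖(40:ℂ) • (w*w*w) - (15:ℂ) • (w*w*w*w) + (9:ℂ) • (w*w*w*w*w)‖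
      ≤ 40*‖w‖^3 + 15*‖w‖^4 + 9*‖w‖^5 := by
    refine (norm_add_le _ _).trans ?_
    have h1 : ‖(40:ℂ) • (w*w*w) - (15:ℂ) • (w*w*w*w)‖
        ≤ ‖(40:ℂ) • (w*w*w)‖ + ‖(15:ℂ) • (w*w*w*w)‖ := norm_sub_le _ _
    rw [norm_smul, norm_smul] at h1
    rw [norm_smul]
    simp only [Complex.norm_ofNat] at h1 ⊢
    nlinarith [norm_nonneg w]
  nlinarith [norm_nonneg ((40:ℂ) • (w*w*w) - (15:ℂ) • (w*w*w*w) + (9:ℂ) • (w*w*w*w*w)), norm_nonneg w]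

theorem st4_uu (a : A) :
    star (a * st4q (star a * a)) * (a * st4q (star a * a))
      = st4q (star a * a) * (star a * a) * st4q (star a * a) := by
  have hc : star (star a * a) = star a * a := by rw [star_mul, star_star]
  rw [star_mul, st4q_star hc]
  noncomm_ring

theorem st4_uu' (a : A) :
    (a * st4q (star a * a)) * star (a * st4q (star a * a))
      = st4q (a * star a) * (a * star a) * st4q (a * star a) := by
  have hc : star (star a * a) = star a * a := by rw [star_mul, star_star]
  have h2 : st4q (star a * a) * star a = star a * st4q (a * star a) := by
    have h := st4q_comm (star a)
    rw [star_star] at h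
    exact h.symm
  rw [star_mul, st4q_star hc, st4q_comm, h2]
  noncomm_ring


theorem st4q_sub_one (c : A) : ‖st4q c - 1‖ ≤ (4 * ‖c - 1‖ + 3 * ‖c - 1‖^2) / 8 := by
  have h1 : (1 : A) = (8:ℂ)⁻¹ • ((8:ℂ) • (1:A)) := by rw [smul_smul]; norm_num
  have e15 : (15:A) = (15:ℂ) • (1:A) := by rw [Algebra.smul_def, map_ofNat, mul_one]
  have e10 : (10:A) * c = (10:ℂ) • c := by rw [Algebra.smul_def, map_ofNat]
  have e3 : (3:A) * (c*c) = (3:ℂ) • (c*c) := by rw [Algebra.smul_def, map_ofNat]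
  have expand : ((c:A)-1)*(c-1) = c*c - c - c + 1 := by noncomm_ring
  have key : (15 - 10 * c + 3 * (c * c) : A) - (8:ℂ) • (1:A)
      = (-4:ℂ) • (c - 1) + (3:ℂ) • ((c - 1) * (c - 1)) := by
    rw [e15, e10, e3, expand]
    module
  have step1 : st4q c - 1 = (8:ℂ)⁻¹ • ((15 - 10 * c + 3 * (c * c) : A) - (8:ℂ) • (1:A)) := by
    rw [st4q, smul_sub, smul_smul]
    norm_num
  rw [step1, key, norm_smul]
  have hb : ‖(-4:ℂ) • (c - 1) + (3:ℂ) • ((c - 1) * (c - 1))‖ ≤ 4 * ‖c-1‖ + 3 * ‖c-1‖^2 := by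
    refine (norm_add_le _ _).trans ?_
    rw [norm_smul, norm_smul]
    have : ‖((c:A) - 1) * (c - 1)‖ ≤ ‖c-1‖ * ‖c-1‖ := norm_mul_le _ _
    simp only [norm_neg, Complex.norm_ofNat]
    nlinarith [norm_nonneg (c - 1)]
  have h8n : ‖(8:ℂ)⁻¹‖ = 8⁻¹ := by norm_num
  rw [h8n]
  nlinarith [norm_nonneg (c-1), norm_nonneg ((-4:ℂ) • (c - 1) + (3:ℂ) • ((c - 1) * (c - 1)))]


theorem st4q_map (κ : A →⋆ₐ[ℂ] B) (c : A) : κ (st4q c) = st4q (κ c) := by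
  unfold st4q
  rw [_root_.map_smul, map_add, map_sub, map_mul, map_mul, map_mul]
  simp [map_ofNat]

theorem st4q_one : st4q (1 : A) = 1 := by
  unfold st4q
  have : (15 - 10 * 1 + 3 * (1 * 1) : A) = (8 : ℂ) • (1 : A) := by
    rw [Algebra.smul_def, map_ofNat]
    norm_num
  rw [this, smul_smul]
  norm_num


noncomputable def st4step (ρ : Γ → A) : Γ → A :=
  fun g => st4avg ρ g * st4q (star (st4avg ρ g) * st4avg ρ g)

theorem st4step_ok (κ : A →⋆ₐ[ℂ] B) (ρ₀ : Γ → A) (hρ₀U : ∀ g, ρ₀ g ∈ unitary A)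
    (hκρ₀ : ∀ g h, κ (ρ₀ (g * h)) = κ (ρ₀ g) * κ (ρ₀ h))
    (hone : ‖(1:A)‖ = 1)
    (ρ : Γ → A) (ε : ℝ) (hε0 : 0 ≤ ε) (hε : ε ≤ 1/17)
    (hcont : Continuous ρ)
    (hu1 : ∀ g, ‖star (ρ g) * ρ g - 1‖ ≤ ε^2)
    (hu2 : ∀ g, ‖ρ g * star (ρ g) - 1‖ ≤ ε^2)
    (hdef : ∀ g h, ‖ρ (g * h) - ρ g * ρ h‖ ≤ ε)
    (hκ : ∀ g, κ (ρ g) = κ (ρ₀ g)) :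
    Continuous (st4step ρ) ∧
    (∀ g, ‖star (st4step ρ g) * st4step ρ g - 1‖ ≤ 51 * ε^6) ∧
    (∀ g, ‖st4step ρ g * star (st4step ρ g) - 1‖ ≤ 51 * ε^6) ∧
    (∀ g₁ g₂, ‖st4step ρ (g₁ * g₂) - st4step ρ g₁ * st4step ρ g₂‖ ≤ 11 * ε^2) ∧
    (∀ g, ‖st4step ρ g - ρ g‖ ≤ 2 * ε) ∧
    (∀ g, κ (st4step ρ g) = κ (ρ₀ g)) := by
  haveI := st4μ_prob (Γ := Γ)
  set f : Γ → A := st4avg ρ with hfdef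
  have hM1 : (1:ℝ) ≤ 1 + ε^2 := by nlinarith
  have hq2 : ε^2 ≤ (1/17)^2 := by nlinarith
  have hp2 : ε^2 ≤ ε * (1/17) := by nlinarith
  have hp3 : ε^3 ≤ ε^2 * (1/17) := by
    calc ε^3 = ε^2 * ε := by ring
      _ ≤ ε^2 * (1/17) := mul_le_mul_of_nonneg_left hε (sq_nonneg ε)
  have hp4 : ε^4 ≤ ε^2 * (1/17)^2 := by
    calc ε^4 = ε^2 * ε^2 := by ring
      _ ≤ ε^2 * (1/17)^2 := mul_le_mul_of_nonneg_left hq2 (sq_nonneg ε)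
  have hp5 : ε^5 ≤ ε^2 * (1/17)^3 := by
    calc ε^5 = ε^2 * (ε^2 * ε) := by ring
      _ ≤ ε^2 * ((1/17)^2 * (1/17)) := by
          refine mul_le_mul_of_nonneg_left ?_ (sq_nonneg ε)
          refine mul_le_mul hq2 hε hε0 (by norm_num)
      _ = ε^2 * (1/17)^3 := by ring
  have hp6 : ε^6 ≤ ε^2 * (1/17)^4 := by
    calc ε^6 = ε^2 * (ε^2 * ε^2) := by ring
      _ ≤ ε^2 * ((1/17)^2 * (1/17)^2) := by
          refine mul_le_mul_of_nonneg_left ?_ (sq_nonneg ε)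
          refine mul_le_mul hq2 hq2 (sq_nonneg ε) (by norm_num)
      _ = ε^2 * (1/17)^4 := by ring
  have hp7 : ε^7 ≤ ε^2 * (1/17)^5 := by
    calc ε^7 = ε^2 * (ε^2 * (ε^2 * ε)) := by ring
      _ ≤ ε^2 * ((1/17)^2 * ((1/17)^2 * (1/17))) := by
          refine mul_le_mul_of_nonneg_left ?_ (sq_nonneg ε)
          refine mul_le_mul hq2 ?_ ?_ (by norm_num)
          · exact mul_le_mul hq2 hε hε0 (by norm_num)
          · positivity
      _ = ε^2 * (1/17)^5 := by ring
  -- norm bound on ρ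
  have hρn : ∀ g, ‖ρ g‖ ≤ (1+ε^2) := by
    intro g
    have h1 : ‖ρ g‖ * ‖ρ g‖ = ‖star (ρ g) * ρ g‖ := (CStarRing.norm_star_mul_self).symm
    have h3 : star (ρ g) * ρ g = 1 + (star (ρ g) * ρ g - 1) := by abel
    have h2 : ‖star (ρ g) * ρ g‖ ≤ 1 + ε^2 := by
      rw [h3]
      calc ‖(1:A) + (star (ρ g) * ρ g - 1)‖ ≤ ‖(1:A)‖ + ‖star (ρ g) * ρ g - 1‖ := norm_add_le _ _
        _ ≤ 1 + ε^2 := by rw [hone]; linarith [hu1 g]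
    nlinarith [norm_nonneg (ρ g), sq_nonneg ε, sq_nonneg (ε*ε)]
  -- continuity and integrability helpers
  have hco1 : ∀ g, Continuous fun h => ρ (g*h) * star (ρ h) :=
    fun g => (hcont.comp (continuous_mul_left g)).mul hcont.star
  have hint1 : ∀ g, Integrable (fun h => ρ (g*h) * star (ρ h)) (st4μ Γ) :=
    fun g => st4_integrable (hco1 g)
  have hfcont : Continuous f := st4avg_cont ρ hcont hρn
  -- f - ρ bound
  have hE : ∀ g, ‖f g - ρ g‖ ≤ (1+ε^2) * (ε + ε^2) := by
    intro g
    have hsub : f g - ρ g = ∫ h, (ρ (g*h) * star (ρ h) - ρ g) ∂(st4μ Γ) := by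
      rw [st4_integral_sub (hint1 g) (integrable_const _), st4_integral_const]
      rfl
    rw [hsub]
    apply st4_norm_integral_le
    intro h
    have hid : ρ (g*h) * star (ρ h) - ρ g
        = (ρ (g*h) - ρ g * ρ h) * star (ρ h) + ρ g * (ρ h * star (ρ h) - 1) := by
      noncomm_ring
    rw [hid]
    calc ‖(ρ (g*h) - ρ g * ρ h) * star (ρ h) + ρ g * (ρ h * star (ρ h) - 1)‖
        ≤ ‖(ρ (g*h) - ρ g * ρ h) * star (ρ h)‖ + ‖ρ g * (ρ h * star (ρ h) - 1)‖ := norm_add_le _ _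
      _ ≤ (1+ε^2) * (ε + ε^2) := by
        have t1 := norm_mul_le (ρ (g*h) - ρ g * ρ h) (star (ρ h))
        have t2 := norm_mul_le (ρ g) (ρ h * star (ρ h) - 1)
        rw [norm_star] at t1
        have d1 := hdef g h
        have d2 := hρn h
        have d3 := hu2 h
        have d4 := hρn g
        nlinarith [norm_nonneg (ρ (g*h) - ρ g * ρ h), norm_nonneg (ρ h), norm_nonneg (ρ g),
          norm_nonneg (ρ h * star (ρ h) - 1), sq_nonneg ε]
  have hF : ∀ g, ‖f g‖ ≤ (1+ε^2) * (1 + ε + ε^2) := by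
    intro g
    have h0 : ρ g + (f g - ρ g) = f g := by abel
    have t : ‖f g‖ ≤ ‖ρ g‖ + ‖f g - ρ g‖ := by
      calc ‖f g‖ = ‖ρ g + (f g - ρ g)‖ := by rw [h0]
        _ ≤ ‖ρ g‖ + ‖f g - ρ g‖ := norm_add_le _ _
    have := hE g; have := hρn g
    nlinarith
  -- f at identity
  have hf1eq : (∫ h, ρ h * star (ρ h) ∂(st4μ Γ)) = f 1 := by
    rw [hfdef]
    unfold st4avg
    congr 1
    funext h
    rw [one_mul]
  have hf1 : ‖f 1 - 1‖ ≤ ε^2 := by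
    rw [← hf1eq]
    have : (∫ h, ρ h * star (ρ h) ∂(st4μ Γ)) - 1
        = ∫ h, (ρ h * star (ρ h) - 1) ∂(st4μ Γ) := by
      rw [st4_integral_sub (st4_integrable (φ := fun h => ρ h * star (ρ h)) (hcont.mul hcont.star)) (integrable_const _),
        st4_integral_const]
    rw [this]
    exact st4_norm_integral_le hu2
  -- star symmetry
  have hstarf : ∀ g, star (f g) = f g⁻¹ := by
    intro g
    have h1 : star (f g) = ∫ h, ρ h * star (ρ (g*h)) ∂(st4μ Γ) := by
      rw [hfdef]
      unfold st4avg
      rw [← st4_integral_star]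
      congr 1
      funext h
      rw [star_mul, star_star]
    have h2 : (∫ h, ρ h * star (ρ (g*h)) ∂(st4μ Γ)) = f g⁻¹ := by
      have hs := st4_integral_shift (fun h => ρ (g⁻¹*h) * star (ρ h)) g
      rw [hfdef]
      unfold st4avg
      rw [← hs]
      congr 1
      funext h
      rw [inv_mul_cancel_left]
    rw [h1, h2]
  -- defect of f
  have hDf : ∀ g₁ g₂, ‖f (g₁*g₂) - f g₁ * f g₂‖ ≤ (33/10) * ε^2 := by
    intro g₁ g₂
    set B' : Γ → A := fun h => star (ρ (g₂⁻¹*h)) - star (ρ h) * f g₂ with hB'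
    have hB'cont : Continuous B' :=
      ((hcont.comp (continuous_mul_left g₂⁻¹)).star).sub (hcont.star.mul continuous_const)
    have i_a : Integrable (fun h => ρ (g₁*h) * star (ρ (g₂⁻¹*h))) (st4μ Γ) :=
      st4_integrable ((hcont.comp (continuous_mul_left g₁)).mul
        ((hcont.comp (continuous_mul_left g₂⁻¹)).star))
    have i_b : Integrable (fun h => ρ (g₁*h) * star (ρ h) * f g₂) (st4μ Γ) :=
      st4_integrable ((hco1 g₁).mul continuous_const)
    have i_c : Integrable (fun h => ρ g₁ * (ρ h * B' h)) (st4μ Γ) :=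
      st4_integrable (continuous_const.mul (hcont.mul hB'cont))
    have i_d : Integrable (fun h => (ρ (g₁*h) - ρ g₁ * ρ h) * B' h) (st4μ Γ) :=
      st4_integrable (((hcont.comp (continuous_mul_left g₁)).sub
        (continuous_const.mul hcont)).mul hB'cont)
    have i_e : Integrable (fun h => ρ h * star (ρ (g₂⁻¹*h))) (st4μ Γ) :=
      st4_integrable (hcont.mul ((hcont.comp (continuous_mul_left g₂⁻¹)).star))
    have i_f : Integrable (fun h => (ρ h * star (ρ h)) * f g₂) (st4μ Γ) :=
      st4_integrable ((hcont.mul hcont.star).mul continuous_const)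
    have e2 : f (g₁*g₂) = ∫ h, ρ (g₁*h) * star (ρ (g₂⁻¹*h)) ∂(st4μ Γ) := by
      have hs := st4_integral_shift (fun h => ρ (g₁*h) * star (ρ (g₂⁻¹*h))) g₂
      rw [hfdef]
      unfold st4avg
      rw [← hs]
      congr 1
      funext h
      rw [inv_mul_cancel_left, mul_assoc]
    have e1 : f g₁ * f g₂ = ∫ h, ρ (g₁*h) * star (ρ h) * f g₂ ∂(st4μ Γ) := by
      rw [hfdef]
      unfold st4avg
      exact (st4_integral_mul_right (hint1 g₁) _).symm
    have eΔ : f (g₁*g₂) - f g₁ * f g₂ = ∫ h, ρ (g₁*h) * B' h ∂(st4μ Γ) := by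
      rw [e1, e2, ← st4_integral_sub i_a i_b]
      congr 1
      funext h
      rw [hB']
      noncomm_ring
    have eΔ2 : (∫ h, ρ (g₁*h) * B' h ∂(st4μ Γ))
        = ρ g₁ * (∫ h, ρ h * B' h ∂(st4μ Γ))
          + ∫ h, (ρ (g₁*h) - ρ g₁ * ρ h) * B' h ∂(st4μ Γ) := by
      have hsplit : (fun h => ρ (g₁*h) * B' h)
          = fun h => ρ g₁ * (ρ h * B' h) + (ρ (g₁*h) - ρ g₁ * ρ h) * B' h := by
        funext h
        noncomm_ring
      rw [hsplit, integral_add i_c i_d, st4_integral_mul_left (st4_integrable (φ := fun h => ρ h * B' h) (hcont.mul hB'cont))]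
    have einner : (∫ h, ρ h * B' h ∂(st4μ Γ)) = f g₂ - f 1 * f g₂ := by
      have hpt : (fun h => ρ h * B' h)
          = fun h => ρ h * star (ρ (g₂⁻¹*h)) - (ρ h * star (ρ h)) * f g₂ := by
        funext h
        rw [hB']
        noncomm_ring
      rw [hpt, st4_integral_sub i_e i_f]
      congr 1
      · have hs := st4_integral_shift (fun h => ρ h * star (ρ (g₂⁻¹*h))) g₂
        rw [hfdef]
        unfold st4avg
        rw [← hs]
        congr 1
        funext h
        rw [inv_mul_cancel_left]
      · rw [st4_integral_mul_right (st4_integrable (φ := fun h => ρ h * star (ρ h)) (hcont.mul hcont.star)) _, hf1eq]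
    -- bound on B'
    have hBb : ∀ h, ‖B' h‖ ≤ (1+ε^2)*(ε + ε^2) + (1+ε^2)*((1+ε^2)*(ε+ε^2)) := by
      intro h
      have hb1 : ‖star (ρ (g₂⁻¹*h)) - star (ρ h) * ρ g₂‖ ≤ ε^2*(1+ε^2) + (1+ε^2)*ε := by
        have hsstar : star (ρ (g₂⁻¹*h) - star (ρ g₂) * ρ h)
            = star (ρ (g₂⁻¹*h)) - star (ρ h) * ρ g₂ := by
          rw [star_sub, star_mul, star_star]
        rw [← hsstar, norm_star]
        have hexp : ρ (g₂⁻¹*h) - star (ρ g₂) * ρ h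
            = -((star (ρ g₂) * ρ g₂ - 1) * ρ (g₂⁻¹*h))
              - star (ρ g₂) * (ρ (g₂*(g₂⁻¹*h)) - ρ g₂ * ρ (g₂⁻¹*h)) := by
          rw [mul_inv_cancel_left]
          noncomm_ring
        rw [hexp]
        calc ‖-((star (ρ g₂) * ρ g₂ - 1) * ρ (g₂⁻¹*h))
              - star (ρ g₂) * (ρ (g₂*(g₂⁻¹*h)) - ρ g₂ * ρ (g₂⁻¹*h))‖
            ≤ ‖-((star (ρ g₂) * ρ g₂ - 1) * ρ (g₂⁻¹*h))‖
              + ‖star (ρ g₂) * (ρ (g₂*(g₂⁻¹*h)) - ρ g₂ * ρ (g₂⁻¹*h))‖ := norm_sub_le _ _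
          _ ≤ ε^2*(1+ε^2) + (1+ε^2)*ε := by
            rw [norm_neg]
            have t1 := norm_mul_le (star (ρ g₂) * ρ g₂ - 1) (ρ (g₂⁻¹*h))
            have t2 := norm_mul_le (star (ρ g₂)) (ρ (g₂*(g₂⁻¹*h)) - ρ g₂ * ρ (g₂⁻¹*h))
            rw [norm_star] at t2
            have d1 := hu1 g₂
            have d2 := hρn (g₂⁻¹*h)
            have d3 := hdef g₂ (g₂⁻¹*h)
            have d4 := hρn g₂
            nlinarith [norm_nonneg (star (ρ g₂) * ρ g₂ - 1), norm_nonneg (ρ (g₂⁻¹*h)),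
              norm_nonneg (ρ g₂), norm_nonneg (ρ (g₂*(g₂⁻¹*h)) - ρ g₂ * ρ (g₂⁻¹*h))]
      have hd : B' h = (star (ρ (g₂⁻¹*h)) - star (ρ h) * ρ g₂) - star (ρ h) * (f g₂ - ρ g₂) := by
        rw [hB']
        noncomm_ring
      rw [hd]
      calc ‖(star (ρ (g₂⁻¹*h)) - star (ρ h) * ρ g₂) - star (ρ h) * (f g₂ - ρ g₂)‖
          ≤ ‖star (ρ (g₂⁻¹*h)) - star (ρ h) * ρ g₂‖ + ‖star (ρ h) * (f g₂ - ρ g₂)‖ :=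
            norm_sub_le _ _
        _ ≤ (1+ε^2)*(ε + ε^2) + (1+ε^2)*((1+ε^2)*(ε+ε^2)) := by
          have t3 := norm_mul_le (star (ρ h)) (f g₂ - ρ g₂)
          rw [norm_star] at t3
          have d5 := hρn h
          have d6 := hE g₂
          nlinarith [norm_nonneg (ρ h), norm_nonneg (f g₂ - ρ g₂)]
    -- assemble
    have hterm1 : ‖ρ g₁ * (∫ h, ρ h * B' h ∂(st4μ Γ))‖ ≤ (1+ε^2) * (ε^2 * ((1+ε^2)*(1+ε+ε^2))) := by
      rw [einner]
      have hfac : f g₂ - f 1 * f g₂ = (1 - f 1) * f g₂ := by noncomm_ring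
      rw [hfac]
      have t1 := norm_mul_le (ρ g₁) ((1 - f 1) * f g₂)
      have t2 := norm_mul_le (1 - f 1) (f g₂)
      have d1 : ‖(1:A) - f 1‖ ≤ ε^2 := by rw [norm_sub_rev]; exact hf1
      have d2 := hF g₂
      have d3 := hρn g₁
      have s1 : ‖(1 - f 1) * f g₂‖ ≤ ε^2 * ((1+ε^2)*(1+ε+ε^2)) :=
        t2.trans (mul_le_mul d1 d2 (norm_nonneg _) (by positivity))
      exact t1.trans (mul_le_mul d3 s1 (norm_nonneg _) (by positivity))
    have hterm2 : ‖∫ h, (ρ (g₁*h) - ρ g₁ * ρ h) * B' h ∂(st4μ Γ)‖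
        ≤ ε * ((1+ε^2)*(ε + ε^2) + (1+ε^2)*((1+ε^2)*(ε+ε^2))) := by
      apply st4_norm_integral_le
      intro h
      have t1 := norm_mul_le (ρ (g₁*h) - ρ g₁ * ρ h) (B' h)
      have d1 := hdef g₁ h
      have d2 := hBb h
      nlinarith [norm_nonneg (ρ (g₁*h) - ρ g₁ * ρ h), norm_nonneg (B' h), sq_nonneg ε]
    have htri : ‖f (g₁*g₂) - f g₁ * f g₂‖
        ≤ (1+ε^2) * (ε^2 * ((1+ε^2)*(1+ε+ε^2))) + ε * ((1+ε^2)*(ε + ε^2) + (1+ε^2)*((1+ε^2)*(ε+ε^2))) := by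
      rw [eΔ, eΔ2]
      calc ‖ρ g₁ * (∫ h, ρ h * B' h ∂(st4μ Γ))
            + ∫ h, (ρ (g₁*h) - ρ g₁ * ρ h) * B' h ∂(st4μ Γ)‖
          ≤ ‖ρ g₁ * (∫ h, ρ h * B' h ∂(st4μ Γ))‖
            + ‖∫ h, (ρ (g₁*h) - ρ g₁ * ρ h) * B' h ∂(st4μ Γ)‖ := norm_add_le _ _
        _ ≤ _ := add_le_add hterm1 hterm2
    refine htri.trans ?_
    nlinarith [hp3, hp4, hp5, hp6, hp7, sq_nonneg ε, hε0, hε]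
  -- almost-unitarity of f
  have hw1 : ∀ g, ‖star (f g) * f g - 1‖ ≤ (43/10) * ε^2 := by
    intro g
    rw [hstarf g]
    have e : f g⁻¹ * f g - 1 = (f 1 - 1) - (f (g⁻¹*g) - f g⁻¹ * f g) := by
      rw [inv_mul_cancel]
      abel
    rw [e]
    calc ‖(f 1 - 1) - (f (g⁻¹*g) - f g⁻¹ * f g)‖
        ≤ ‖f 1 - 1‖ + ‖f (g⁻¹*g) - f g⁻¹ * f g‖ := norm_sub_le _ _
      _ ≤ (43/10) * ε^2 := by
        have := hDf g⁻¹ g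
        linarith [hf1]
  have hw2 : ∀ g, ‖f g * star (f g) - 1‖ ≤ (43/10) * ε^2 := by
    intro g
    rw [hstarf g]
    have e : f g * f g⁻¹ - 1 = (f 1 - 1) - (f (g*g⁻¹) - f g * f g⁻¹) := by
      rw [mul_inv_cancel]
      abel
    rw [e]
    calc ‖(f 1 - 1) - (f (g*g⁻¹) - f g * f g⁻¹)‖
        ≤ ‖f 1 - 1‖ + ‖f (g*g⁻¹) - f g * f g⁻¹‖ := norm_sub_le _ _
      _ ≤ (43/10) * ε^2 := by
        have := hDf g g⁻¹
        linarith [hf1]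
  -- the unitarized map
  have hueq : ∀ g, st4step ρ g = f g * st4q (star (f g) * f g) := fun g => rfl
  have hUF : ∀ g, ‖st4step ρ g - f g‖ ≤ (12/5) * ε^2 := by
    intro g
    rw [hueq g]
    have e : f g * st4q (star (f g) * f g) - f g = f g * (st4q (star (f g) * f g) - 1) := by
      rw [mul_sub, mul_one]
    rw [e]
    have t1 := norm_mul_le (f g) (st4q (star (f g) * f g) - 1)
    have t2 := st4q_sub_one (star (f g) * f g)
    have d1 := hw1 g
    have d2 := hF g
    have wnn := norm_nonneg (star (f g) * f g - 1)
    have s0 : ‖st4q (star (f g) * f g) - 1‖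
        ≤ (4*((43/10)*ε^2) + 3*((43/10)*ε^2)^2)/8 := by
      refine t2.trans ?_
      nlinarith [wnn, d1, sq_nonneg ε]
    refine t1.trans ((mul_le_mul d2 s0 (norm_nonneg _) (by positivity)).trans ?_)
    nlinarith [hp3, hp4, hp5, hp6, hp7, sq_nonneg ε, hε0, hε]
  have hdist : ∀ g, ‖st4step ρ g - ρ g‖ ≤ 2 * ε := by
    intro g
    have e : st4step ρ g - ρ g = (st4step ρ g - f g) + (f g - ρ g) := by abel
    rw [e]
    calc ‖(st4step ρ g - f g) + (f g - ρ g)‖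
        ≤ ‖st4step ρ g - f g‖ + ‖f g - ρ g‖ := norm_add_le _ _
      _ ≤ 2 * ε := by
        have := hUF g; have := hE g
        nlinarith [hp2, hp3, sq_nonneg ε, hε0, hε]
  have hUn : ∀ g, ‖st4step ρ g‖ ≤ (1+ε^2) * (1 + ε + ε^2) + (12/5) * ε^2 := by
    intro g
    have h0 : f g + (st4step ρ g - f g) = st4step ρ g := by abel
    have t : ‖st4step ρ g‖ ≤ ‖f g‖ + ‖st4step ρ g - f g‖ := by
      calc ‖st4step ρ g‖ = ‖f g + (st4step ρ g - f g)‖ := by rw [h0]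
        _ ≤ ‖f g‖ + ‖st4step ρ g - f g‖ := norm_add_le _ _
    have := hUF g; have := hF g
    linarith
  -- unitarity defects of the step
  have hu'1 : ∀ g, ‖star (st4step ρ g) * st4step ρ g - 1‖ ≤ 51 * ε^6 := by
    intro g
    rw [hueq g, st4_uu (f g)]
    refine (st4_qcq_norm (star (f g) * f g)).trans ?_
    set W : ℝ := ‖star (f g) * f g - 1‖ with hW
    have hW0 : 0 ≤ W := norm_nonneg _
    have hWb : W ≤ (43/10) * ε^2 := hw1 g
    have h3 : W^3 ≤ ((43/10) * ε^2)^3 := pow_le_pow_left₀ hW0 hWb 3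
    have h4 : W^4 ≤ ((43/10) * ε^2)^4 := pow_le_pow_left₀ hW0 hWb 4
    have h5 : W^5 ≤ ((43/10) * ε^2)^5 := pow_le_pow_left₀ hW0 hWb 5
    have hε2 : ε^2 ≤ (1/17)^2 := by nlinarith
    nlinarith [sq_nonneg ε, pow_nonneg hε0 6, pow_nonneg hε0 4, pow_nonneg hε0 2]
  have hu'2 : ∀ g, ‖st4step ρ g * star (st4step ρ g) - 1‖ ≤ 51 * ε^6 := by
    intro g
    rw [hueq g, st4_uu' (f g)]
    refine (st4_qcq_norm (f g * star (f g))).trans ?_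
    set W : ℝ := ‖f g * star (f g) - 1‖ with hW
    have hW0 : 0 ≤ W := norm_nonneg _
    have hWb : W ≤ (43/10) * ε^2 := hw2 g
    have h3 : W^3 ≤ ((43/10) * ε^2)^3 := pow_le_pow_left₀ hW0 hWb 3
    have h4 : W^4 ≤ ((43/10) * ε^2)^4 := pow_le_pow_left₀ hW0 hWb 4
    have h5 : W^5 ≤ ((43/10) * ε^2)^5 := pow_le_pow_left₀ hW0 hWb 5
    have hε2 : ε^2 ≤ (1/17)^2 := by nlinarith
    nlinarith [sq_nonneg ε, pow_nonneg hε0 6, pow_nonneg hε0 4, pow_nonneg hε0 2]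
  -- defect of the step
  have hdefu : ∀ g₁ g₂, ‖st4step ρ (g₁*g₂) - st4step ρ g₁ * st4step ρ g₂‖ ≤ 11 * ε^2 := by
    intro g₁ g₂
    have key : st4step ρ (g₁*g₂) - st4step ρ g₁ * st4step ρ g₂
        = (st4step ρ (g₁*g₂) - f (g₁*g₂)) + (f (g₁*g₂) - f g₁ * f g₂)
          + ((f g₁ - st4step ρ g₁) * f g₂ + st4step ρ g₁ * (f g₂ - st4step ρ g₂)) := by
      noncomm_ring
    rw [key]
    have n1 := hUF (g₁*g₂)
    have n2 := hDf g₁ g₂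
    have n3 : ‖(f g₁ - st4step ρ g₁) * f g₂‖ ≤ (12/5) * ε^2 * ((1+ε^2) * (1 + ε + ε^2)) := by
      have t := norm_mul_le (f g₁ - st4step ρ g₁) (f g₂)
      have d1 : ‖f g₁ - st4step ρ g₁‖ ≤ (12/5) * ε^2 := by
        rw [norm_sub_rev]; exact hUF g₁
      have d2 := hF g₂
      exact t.trans (mul_le_mul d1 d2 (norm_nonneg _) (by positivity))
    have n4 : ‖st4step ρ g₁ * (f g₂ - st4step ρ g₂)‖
        ≤ ((1+ε^2) * (1 + ε + ε^2) + (12/5) * ε^2) * ((12/5) * ε^2) := by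
      have t := norm_mul_le (st4step ρ g₁) (f g₂ - st4step ρ g₂)
      have d1 : ‖f g₂ - st4step ρ g₂‖ ≤ (12/5) * ε^2 := by
        rw [norm_sub_rev]; exact hUF g₂
      have d2 := hUn g₁
      exact t.trans (mul_le_mul d2 d1 (norm_nonneg _) (by positivity))
    calc ‖(st4step ρ (g₁*g₂) - f (g₁*g₂)) + (f (g₁*g₂) - f g₁ * f g₂)
          + ((f g₁ - st4step ρ g₁) * f g₂ + st4step ρ g₁ * (f g₂ - st4step ρ g₂))‖
        ≤ ‖(st4step ρ (g₁*g₂) - f (g₁*g₂)) + (f (g₁*g₂) - f g₁ * f g₂)‖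
          + ‖(f g₁ - st4step ρ g₁) * f g₂ + st4step ρ g₁ * (f g₂ - st4step ρ g₂)‖ :=
          norm_add_le _ _
      _ ≤ ‖st4step ρ (g₁*g₂) - f (g₁*g₂)‖ + ‖f (g₁*g₂) - f g₁ * f g₂‖
          + (‖(f g₁ - st4step ρ g₁) * f g₂‖ + ‖st4step ρ g₁ * (f g₂ - st4step ρ g₂)‖) := by
          have := norm_add_le (st4step ρ (g₁*g₂) - f (g₁*g₂)) (f (g₁*g₂) - f g₁ * f g₂)
          have := norm_add_le ((f g₁ - st4step ρ g₁) * f g₂)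
            (st4step ρ g₁ * (f g₂ - st4step ρ g₂))
          linarith
      _ ≤ 11 * ε^2 := by
          nlinarith [n1, n2, n3, n4, hp3, hp4, hp5, hp6, hp7, sq_nonneg ε, hε0, hε]
  -- κ compatibility
  have hκf : ∀ g, κ (f g) = κ (ρ₀ g) := by
    intro g
    letI : CStarAlgebra A := {}
    letI : CStarAlgebra B := {}
    have hκcont : Continuous κ :=
      AddMonoidHomClass.continuous_of_bound κ 1
        (fun x => by simpa using NonUnitalStarAlgHom.norm_apply_le κ x)
    let κL : A →L[ℂ] B := ⟨κ.toAlgHom.toLinearMap, hκcont⟩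
    have hcomp : κ (f g) = ∫ h, κ (ρ (g*h) * star (ρ h)) ∂(st4μ Γ) := by
      have := κL.integral_comp_comm (hint1 g)
      rw [hfdef]
      unfold st4avg
      exact this.symm
    rw [hcomp]
    have hptκ : (fun h => κ (ρ (g*h) * star (ρ h))) = fun _ => κ (ρ₀ g) := by
      funext h
      rw [map_mul, map_star, hκ, hκ, hκρ₀ g h, mul_assoc, ← map_star, ← map_mul,
        (Unitary.mem_iff.mp (hρ₀U h)).2, map_one, mul_one]
    rw [hptκ, st4_integral_const]
  have hκu : ∀ g, κ (st4step ρ g) = κ (ρ₀ g) := by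
    intro g
    rw [hueq g, map_mul, st4q_map, map_mul, map_star, hκf g]
    have : star (κ (ρ₀ g)) * κ (ρ₀ g) = 1 := by
      rw [← map_star, ← map_mul, (Unitary.mem_iff.mp (hρ₀U g)).1, map_one]
    rw [this, st4q_one, mul_one]
  -- continuity of the step
  have hqcont : Continuous fun x : A => st4q x := by
    unfold st4q
    exact (((continuous_const.sub (continuous_const.mul continuous_id)).add
      (continuous_const.mul (continuous_id.mul continuous_id)))).const_smul _
  have hcontu : Continuous (st4step ρ) := by
    unfold st4step
    exact hfcont.mul (hqcont.comp ((hfcont.star).mul hfcont))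
  exact ⟨hcontu, hu'1, hu'2, hdefu, hdist, hκu⟩

noncomputable def st4seq (ρ₀ : Γ → A) : ℕ → Γ → A
  | 0 => ρ₀
  | n+1 => st4step (st4seq ρ₀ n)

end Aux

theorem stmt4 {Γ : Type*} [Group Γ] [TopologicalSpace Γ] [IsTopologicalGroup Γ] [CompactSpace Γ]
    [MeasurableSpace Γ] [BorelSpace Γ]
    {A : Type*} [NormedRing A] [StarRing A] [CStarRing A] [CompleteSpace A]
    [NormedAlgebra ℂ A] [StarModule ℂ A]
    {B : Type*} [NormedRing B] [StarRing B] [CStarRing B] [CompleteSpace B]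
    [NormedAlgebra ℂ B] [StarModule ℂ B]
    (κ : A →⋆ₐ[ℂ] B)
    (r : ℝ) (hr0 : 0 ≤ r) (hr : r < 1 / 17)
    (ρ₀ : Γ → A) (hρ₀U : ∀ g, ρ₀ g ∈ unitary A) (hρ₀cont : Continuous ρ₀)
    (hρ₀ : ∀ g h, ‖ρ₀ (g * h) - ρ₀ g * ρ₀ h‖ ≤ r)
    (hκρ₀ : ∀ g h, κ (ρ₀ (g * h)) = κ (ρ₀ g) * κ (ρ₀ h)) :
    ∃ ρ : Γ → A, (∀ g, ρ g ∈ unitary A) ∧ Continuous ρ ∧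
      (∀ g h, ρ (g * h) = ρ g * ρ h) ∧
      (∀ g, ‖ρ g - ρ₀ g‖ ≤ 2 * r / (1 - 17 * r)) ∧
      (∀ g, κ (ρ g) = κ (ρ₀ g)) := by
  have h17 : 0 < 1 - 17 * r := by linarith
  by_cases htriv : Subsingleton A
  · refine ⟨ρ₀, hρ₀U, hρ₀cont, fun g h => Subsingleton.elim _ _, fun g => ?_, fun g => rfl⟩
    rw [sub_self, norm_zero]
    positivity
  · haveI : Nontrivial A := not_subsingleton_iff_nontrivial.mp htriv
    have hone : ‖(1:A)‖ = 1 := CStarRing.norm_one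
    set q : ℝ := 17 * r with hqdef
    have hq0 : 0 ≤ q := by positivity
    have hq1 : q < 1 := by rw [hqdef]; linarith
    set e : ℕ → ℝ := fun n => r * q^n with hedef
    have he0 : ∀ n, 0 ≤ e n := fun n => by positivity
    have heler : ∀ n, e n ≤ r := by
      intro n
      have h1 : q^n ≤ 1 := pow_le_one₀ hq0 (le_of_lt hq1)
      calc e n = r * q^n := rfl
        _ ≤ r * 1 := mul_le_mul_of_nonneg_left h1 hr0
        _ = r := mul_one r
    set S : ℕ → Γ → A := st4seq ρ₀ with hSdef
    have hInv : ∀ n, Continuous (S n) ∧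
        (∀ g, ‖star (S n g) * S n g - 1‖ ≤ (e n)^2) ∧
        (∀ g, ‖S n g * star (S n g) - 1‖ ≤ (e n)^2) ∧
        (∀ g₁ g₂, ‖S n (g₁ * g₂) - S n g₁ * S n g₂‖ ≤ e n) ∧
        (∀ g, κ (S n g) = κ (ρ₀ g)) := by
      intro n
      induction n with
      | zero =>
        refine ⟨hρ₀cont, fun g => ?_, fun g => ?_, fun g₁ g₂ => ?_, fun g => rfl⟩
        · rw [show S 0 g = ρ₀ g from rfl, (Unitary.mem_iff.mp (hρ₀U g)).1, sub_self, norm_zero]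
          positivity
        · rw [show S 0 g = ρ₀ g from rfl, (Unitary.mem_iff.mp (hρ₀U g)).2, sub_self, norm_zero]
          positivity
        · have h0 : e 0 = r := by show r * q^0 = r; simp
          rw [h0]
          exact hρ₀ g₁ g₂
      | succ n ih =>
        obtain ⟨ihc, ihu1, ihu2, ihd, ihκ⟩ := ih
        have hεr : e n ≤ r := heler n
        have hε17 : e n ≤ 1/17 := le_trans hεr (le_of_lt hr)
        have step := st4step_ok κ ρ₀ hρ₀U hκρ₀ hone (S n) (e n) (he0 n) hε17 ihc ihu1 ihu2 ihd ihκ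
        obtain ⟨sc, su1, su2, sd, sdist, sκ⟩ := step
        have hSn1 : S (n+1) = st4step (S n) := rfl
        have hee : e (n+1) = 17 * r * e n := by
          show r * q^(n+1) = 17*r*(r*q^n)
          rw [pow_succ, hqdef]
          ring
        have hquad : 51 * (e n)^6 ≤ (e (n+1))^2 := by
          rw [hee]
          have h2 : (e n)^2 ≤ r^2 := by nlinarith [he0 n, hεr]
          have h4 : (e n)^4 ≤ r^4 := by nlinarith [he0 n, hεr, pow_nonneg (he0 n) 2, h2, pow_nonneg hr0 2]
          have hr1 : r ≤ 1 := by linarith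
          calc 51 * (e n)^6 = 51 * (e n)^4 * (e n)^2 := by ring
            _ ≤ 51 * r^4 * (e n)^2 := by
                have := mul_le_mul_of_nonneg_right h4 (pow_nonneg (he0 n) 2)
                nlinarith [pow_nonneg (he0 n) 2]
            _ ≤ 289 * r^2 * (e n)^2 := by
                have hrr : r^2 ≤ 1 := by nlinarith
                have hr2 : r^4 ≤ r^2 := by
                  calc r^4 = r^2*r^2 := by ring
                    _ ≤ r^2 * 1 := mul_le_mul_of_nonneg_left hrr (pow_nonneg hr0 2)
                    _ = r^2 := mul_one _
                nlinarith [pow_nonneg (he0 n) 2, pow_nonneg hr0 2, pow_nonneg hr0 4,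
                  mul_nonneg (pow_nonneg hr0 2) (pow_nonneg (he0 n) 2)]
            _ = (17 * r * e n)^2 := by ring
        refine ⟨by rw [hSn1]; exact sc, fun g => ?_, fun g => ?_, fun g₁ g₂ => ?_, fun g => by
          rw [hSn1]; exact sκ g⟩
        · rw [hSn1]
          exact (su1 g).trans hquad
        · rw [hSn1]
          exact (su2 g).trans hquad
        · rw [hSn1]
          refine (sd g₁ g₂).trans ?_
          rw [hee]
          nlinarith [he0 n, hεr]
    have hstep_dist : ∀ n g, ‖S (n+1) g - S n g‖ ≤ 2 * e n := by
      intro n g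
      obtain ⟨ihc, ihu1, ihu2, ihd, ihκ⟩ := hInv n
      have hεr : e n ≤ r := heler n
      have hε17 : e n ≤ 1/17 := le_trans hεr (le_of_lt hr)
      have step := st4step_ok κ ρ₀ hρ₀U hκρ₀ hone (S n) (e n) (he0 n) hε17 ihc ihu1 ihu2 ihd ihκ
      exact step.2.2.2.2.1 g
    have hcau : ∀ g, CauchySeq (fun n => S n g) := by
      intro g
      apply cauchySeq_of_le_geometric q (2*r) hq1
      intro n
      rw [dist_eq_norm, norm_sub_rev]
      calc ‖S (n+1) g - S n g‖ ≤ 2 * e n := hstep_dist n g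
        _ = 2*r*q^n := by show 2*(r*q^n) = 2*r*q^n; ring
    choose ρlim hρlim using fun g => cauchySeq_tendsto_of_complete (hcau g)
    have hpart : ∀ n g, ‖S n g - ρ₀ g‖ ≤ 2*r*(1-q^n)/(1-17*r) := by
      intro n g
      induction n with
      | zero =>
        rw [show S 0 g = ρ₀ g from rfl, sub_self, norm_zero]
        simp
      | succ n ih =>
        have h1 : S (n+1) g - ρ₀ g = (S (n+1) g - S n g) + (S n g - ρ₀ g) := by abel
        rw [h1]
        calc ‖(S (n+1) g - S n g) + (S n g - ρ₀ g)‖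
            ≤ ‖S (n+1) g - S n g‖ + ‖S n g - ρ₀ g‖ := norm_add_le _ _
          _ ≤ 2 * e n + 2*r*(1-q^n)/(1-17*r) := add_le_add (hstep_dist n g) ih
          _ = 2*r*(1-q^(n+1))/(1-17*r) := by
            show 2*(r*q^n) + 2*r*(1-q^n)/(1-17*r) = _
            rw [hqdef, pow_succ]
            rw [eq_div_iff h17.ne', add_mul, div_mul_cancel₀ _ h17.ne']
            ring
    have hpart' : ∀ n g, ‖S n g - ρ₀ g‖ ≤ 2*r/(1-17*r) := by
      intro n g
      refine (hpart n g).trans ?_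
      rw [div_le_div_iff₀ h17 h17]
      nlinarith [pow_nonneg hq0 n, h17, hr0, mul_nonneg (mul_nonneg hr0 (pow_nonneg hq0 n)) (le_of_lt h17)]
    have hdistlim : ∀ g, ‖ρlim g - ρ₀ g‖ ≤ 2*r/(1-17*r) := by
      intro g
      have h1 : Tendsto (fun n => ‖S n g - ρ₀ g‖) atTop (𝓝 ‖ρlim g - ρ₀ g‖) :=
        ((hρlim g).sub tendsto_const_nhds).norm
      exact le_of_tendsto h1 (Eventually.of_forall (fun n => hpart' n g))
    have he_tend : Tendsto e atTop (𝓝 0) := by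
      have h0 : Tendsto (fun n => q^n) atTop (𝓝 0) :=
        tendsto_pow_atTop_nhds_zero_of_lt_one hq0 hq1
      have h1 := h0.const_mul r
      have h2 : (fun n => r * q^n) = e := rfl
      rw [h2] at h1
      simpa using h1
    have hmul : ∀ g h, ρlim (g*h) = ρlim g * ρlim h := by
      intro g h
      have h1 : Tendsto (fun n => S n (g*h) - S n g * S n h) atTop
          (𝓝 (ρlim (g*h) - ρlim g * ρlim h)) :=
        (hρlim (g*h)).sub ((hρlim g).mul (hρlim h))
      have h2 : Tendsto (fun n => S n (g*h) - S n g * S n h) atTop (𝓝 0) := by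
        rw [tendsto_zero_iff_norm_tendsto_zero]
        exact squeeze_zero (fun n => norm_nonneg _) (fun n => (hInv n).2.2.2.1 g h) he_tend
      exact sub_eq_zero.mp (tendsto_nhds_unique h1 h2)
    have he2_tend : Tendsto (fun n => (e n)^2) atTop (𝓝 0) := by
      have := he_tend.pow 2
      simpa using this
    have hulim : ∀ g, ρlim g ∈ unitary A := by
      intro g
      rw [Unitary.mem_iff]
      constructor
      · have h1 : Tendsto (fun n => star (S n g) * S n g - 1) atTop
            (𝓝 (star (ρlim g) * ρlim g - 1)) :=
          (((hρlim g).star).mul (hρlim g)).sub tendsto_const_nhds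
        have h2 : Tendsto (fun n => star (S n g) * S n g - 1) atTop (𝓝 0) := by
          rw [tendsto_zero_iff_norm_tendsto_zero]
          exact squeeze_zero (fun n => norm_nonneg _) (fun n => (hInv n).2.1 g) he2_tend
        exact sub_eq_zero.mp (tendsto_nhds_unique h1 h2)
      · have h1 : Tendsto (fun n => S n g * star (S n g) - 1) atTop
            (𝓝 (ρlim g * star (ρlim g) - 1)) :=
          ((hρlim g).mul ((hρlim g).star)).sub tendsto_const_nhds
        have h2 : Tendsto (fun n => S n g * star (S n g) - 1) atTop (𝓝 0) := by
          rw [tendsto_zero_iff_norm_tendsto_zero]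
          exact squeeze_zero (fun n => norm_nonneg _) (fun n => (hInv n).2.2.1 g) he2_tend
        exact sub_eq_zero.mp (tendsto_nhds_unique h1 h2)
    have hκlim : ∀ g, κ (ρlim g) = κ (ρ₀ g) := by
      intro g
      letI : CStarAlgebra A := {}
      letI : CStarAlgebra B := {}
      have hκcont : Continuous κ :=
        AddMonoidHomClass.continuous_of_bound κ 1
          (fun x => by simpa using NonUnitalStarAlgHom.norm_apply_le κ x)
      have h1 : Tendsto (fun n => κ (S n g)) atTop (𝓝 (κ (ρlim g))) :=
        (hκcont.tendsto (ρlim g)).comp (hρlim g)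
      have h2 : (fun n => κ (S n g)) = fun _ => κ (ρ₀ g) :=
        funext fun n => (hInv n).2.2.2.2 g
      rw [h2] at h1
      exact tendsto_nhds_unique h1 tendsto_const_nhds
    have htail : ∀ n g, ‖ρlim g - S n g‖ ≤ 2*r*q^n/(1-17*r) := by
      intro n g
      have hb : ∀ m, ‖S (n+m) g - S n g‖ ≤ 2*r*q^n*(1-q^m)/(1-17*r) := by
        intro m
        induction m with
        | zero =>
          rw [show n+0 = n from rfl, sub_self, norm_zero]
          simp
        | succ m ih =>
          have h1 : S (n+(m+1)) g - S n g
              = (S ((n+m)+1) g - S (n+m) g) + (S (n+m) g - S n g) := by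
            rw [show n+(m+1) = (n+m)+1 from rfl]
            abel
          rw [h1]
          calc ‖(S ((n+m)+1) g - S (n+m) g) + (S (n+m) g - S n g)‖
              ≤ ‖S ((n+m)+1) g - S (n+m) g‖ + ‖S (n+m) g - S n g‖ := norm_add_le _ _
            _ ≤ 2 * e (n+m) + 2*r*q^n*(1-q^m)/(1-17*r) := add_le_add (hstep_dist (n+m) g) ih
            _ = 2*r*q^n*(1-q^(m+1))/(1-17*r) := by
              show 2*(r*q^(n+m)) + _ = _
              rw [hqdef, pow_add, pow_succ]
              rw [eq_div_iff h17.ne', add_mul, div_mul_cancel₀ _ h17.ne']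
              ring
      have h1 : Tendsto (fun m => ‖S (n+m) g - S n g‖) atTop (𝓝 ‖ρlim g - S n g‖) := by
        have hcomp : Tendsto (fun m => S (n+m) g) atTop (𝓝 (ρlim g)) :=
          ((hρlim g).comp (tendsto_add_atTop_nat n)).congr
            (fun m => by show S (m+n) g = S (n+m) g; rw [Nat.add_comm])
        exact (hcomp.sub tendsto_const_nhds).norm
      refine le_of_tendsto h1 (Eventually.of_forall fun m => (hb m).trans ?_)
      rw [div_le_div_iff₀ h17 h17]
      nlinarith [pow_nonneg hq0 n, pow_nonneg hq0 m, h17, hr0,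
        mul_nonneg (mul_nonneg (mul_nonneg hr0 (pow_nonneg hq0 n)) (pow_nonneg hq0 m)) (le_of_lt h17)]
    have htu : TendstoUniformly (fun n g => S n g) ρlim atTop := by
      rw [Metric.tendstoUniformly_iff]
      intro δ hδ
      have hT : Tendsto (fun n => 2*r*q^n/(1-17*r)) atTop (𝓝 0) := by
        have h0 : Tendsto (fun n => q^n) atTop (𝓝 0) :=
          tendsto_pow_atTop_nhds_zero_of_lt_one hq0 hq1
        have h1 := (h0.const_mul (2*r)).div_const (1-17*r)
        simpa [mul_comm] using h1
      filter_upwards [hT.eventually_lt_const hδ] with n hn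
      intro g
      rw [dist_eq_norm]
      exact lt_of_le_of_lt (htail n g) hn
    have hcontlim : Continuous ρlim :=
      htu.continuous (Frequently.of_forall fun n => (hInv n).1)
    exact ⟨ρlim, hulim, hcontlim, hmul, hdistlim, hκlim⟩
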